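/- (Dual tightness implies (f+ε)-approximation.) Let G = (V, E) be a finite hypergraph of rank f ≥ 1 with nonnegative vertex weights w, let ε ∈ (0,1), and set β = ε/(f+ε). Let δ be a feasible edge packing, i.e. δ(e) ≥ 0 for all e ∈ E and ∑_{e ∋ v} δ(e) ≤ w(v) for all v ∈ V, and let T = { v ∈ V : ∑_{e ∋ v} δ(e) ≥ (1−β)·w(v) } be the set of β-tight vertices. Then for every feasible fractional cover x (x ≥ 0 and ∑_{v ∈ e} x(v) ≥ 1 for all e ∈ E), we have w(T) ≤ (f+ε) · ∑_{v ∈ V} w(v)·x(v). -/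

import Mathlib

/-- Dual tightness implies an `(f+ε)`-approximation: in a hypergraph of rank
`f ≥ 1`, with `β = ε/(f+ε)`, for every feasible edge packing `δ` the weight of
the set of `β`-tight vertices is at most `(f+ε)` times the value of any
feasible fractional cover `x`. -/
theorem tight_vertices_approx
    {V : Type*} [Fintype V] [DecidableEq V]
    (E : Finset (Finset V)) (hE : ∀ e ∈ E, e.Nonempty)
    (f : ℕ) (hf : 1 ≤ f) (hrank : ∀ e ∈ E, e.card ≤ f)
    (w : V → ℝ) (hw : ∀ v, 0 ≤ w v)
    (ε : ℝ) (hε0 : 0 < ε) (hε1 : ε < 1)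
    (β : ℝ) (hβ : β = ε / ((f : ℝ) + ε))
    (δ : Finset V → ℝ) (hδ_nonneg : ∀ e ∈ E, 0 ≤ δ e)
    (hδ_pack : ∀ v : V, ∑ e ∈ E.filter (fun e => v ∈ e), δ e ≤ w v)
    (T : Finset V)
    (hT : T = Finset.univ.filter
      (fun v => (1 - β) * w v ≤ ∑ e ∈ E.filter (fun e => v ∈ e), δ e))
    (x : V → ℝ) (hx_nonneg : ∀ v, 0 ≤ x v)
    (hx_cover : ∀ e ∈ E, 1 ≤ ∑ v ∈ e, x v) :
    ∑ v ∈ T, w v ≤ ((f : ℝ) + ε) * ∑ v : V, w v * x v := by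
  have hfε : (0 : ℝ) < (f : ℝ) + ε := by positivity
  have hδpos : ∀ e ∈ E, 0 ≤ δ e := hδ_nonneg
  -- inner sum nonneg
  have hinner : ∀ v : V, 0 ≤ ∑ e ∈ E.filter (fun e => v ∈ e), δ e := by
    intro v
    exact Finset.sum_nonneg fun e he => hδ_nonneg e (Finset.mem_filter.mp he).1
  -- step 1: (1-β) * ∑_{v∈T} w v ≤ ∑_{v∈univ} ∑_{e∋v} δ e
  have step1 : (1 - β) * ∑ v ∈ T, w v ≤ ∑ v : V, ∑ e ∈ E.filter (fun e => v ∈ e), δ e := by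
    rw [Finset.mul_sum]
    calc ∑ v ∈ T, (1 - β) * w v
        ≤ ∑ v ∈ T, ∑ e ∈ E.filter (fun e => v ∈ e), δ e := by
          apply Finset.sum_le_sum
          intro v hv
          rw [hT] at hv
          exact (Finset.mem_filter.mp hv).2
      _ ≤ ∑ v : V, ∑ e ∈ E.filter (fun e => v ∈ e), δ e := by
          apply Finset.sum_le_sum_of_subset_of_nonneg (Finset.subset_univ T)
          intro v _ _
          exact hinner v
  -- swap: ∑_v ∑_{e∋v} δ e = ∑_e δ e * e.card
  have hswap : ∑ v : V, ∑ e ∈ E.filter (fun e => v ∈ e), δ e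
      = ∑ e ∈ E, δ e * e.card := by
    have : ∀ v : V, ∑ e ∈ E.filter (fun e => v ∈ e), δ e
        = ∑ e ∈ E, if v ∈ e then δ e else 0 := by
      intro v; rw [Finset.sum_filter]
    simp_rw [this]
    rw [Finset.sum_comm]
    congr 1
    ext e
    rw [Finset.sum_ite_mem, Finset.univ_inter, Finset.sum_const, nsmul_eq_mul, mul_comm]
  -- step 2: ∑_e δ e * e.card ≤ f * ∑_e δ e
  have step2 : ∑ e ∈ E, δ e * e.card ≤ (f : ℝ) * ∑ e ∈ E, δ e := by
    rw [Finset.mul_sum]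
    apply Finset.sum_le_sum
    intro e he
    rw [mul_comm ((f:ℝ)) (δ e)]
    exact mul_le_mul_of_nonneg_left (by exact_mod_cast hrank e he) (hδ_nonneg e he)
  -- step 3: ∑_e δ e ≤ ∑_v w v * x v
  have step3 : ∑ e ∈ E, δ e ≤ ∑ v : V, w v * x v := by
    calc ∑ e ∈ E, δ e
        ≤ ∑ e ∈ E, δ e * ∑ v ∈ e, x v := by
          apply Finset.sum_le_sum
          intro e he
          nth_rewrite 1 [← mul_one (δ e)]
          exact mul_le_mul_of_nonneg_left (hx_cover e he) (hδ_nonneg e he)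
      _ = ∑ v : V, x v * ∑ e ∈ E.filter (fun e => v ∈ e), δ e := by
          have hL : ∀ e : Finset V, δ e * ∑ v ∈ e, x v
              = ∑ v : V, if v ∈ e then x v * δ e else 0 := by
            intro e
            rw [Finset.sum_ite_mem, Finset.univ_inter, Finset.mul_sum]
            exact Finset.sum_congr rfl fun v _ => mul_comm _ _
          simp_rw [hL, Finset.sum_filter, Finset.mul_sum, mul_ite, mul_zero]
          exact Finset.sum_comm
      _ ≤ ∑ v : V, w v * x v := by
          apply Finset.sum_le_sum
          intro v _
          rw [mul_comm (w v) (x v)]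
          exact mul_le_mul_of_nonneg_left (hδ_pack v) (hx_nonneg v)
  -- combine
  have key : (1 - β) * ∑ v ∈ T, w v ≤ (f : ℝ) * ∑ v : V, w v * x v := by
    calc (1 - β) * ∑ v ∈ T, w v
        ≤ ∑ e ∈ E, δ e * e.card := by rw [← hswap]; exact step1
      _ ≤ (f : ℝ) * ∑ e ∈ E, δ e := step2
      _ ≤ (f : ℝ) * ∑ v : V, w v * x v := by
          apply mul_le_mul_of_nonneg_left step3 (by positivity)
  have h1β : 1 - β = (f : ℝ) / ((f : ℝ) + ε) := by
    rw [hβ]; field_simp; ring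
  have hfpos : (0 : ℝ) < f := by exact_mod_cast hf
  rw [h1β] at key
  have := mul_le_mul_of_nonneg_left key (le_of_lt (div_pos hfε hfpos))
  calc ∑ v ∈ T, w v
      = ((f : ℝ) + ε) / f * ((f : ℝ) / ((f : ℝ) + ε) * ∑ v ∈ T, w v) := by
        field_simp
    _ ≤ ((f : ℝ) + ε) / f * ((f : ℝ) * ∑ v : V, w v * x v) := this
    _ = ((f : ℝ) + ε) * ∑ v : V, w v * x v := by
        field_simp
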